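/- For every real number k and every A ∈ (0,1) there is a constant C > 0 such that for every real m ≥ 1 and every measurable function f : (0,A) → ℂ one has ∫₀^A r^{2m-1} (-log r)^{k-2} ( ∫_r^A ρ^{-m} |f(ρ)| dρ )² dr ≤ C · ∫₀^A |f(r)|² r (-log r)^k dr (an inequality in [0, ∞]). -/

import Mathlib

open MeasureTheory
open scoped ENNReal

lemma hardyAux_pow_factorial (n : ℕ) {x : ℝ} (hx : 0 ≤ x) : x ^ n ≤ (Nat.factorial n : ℝ) * Real.exp x := by
  have h := Real.sum_le_exp_of_nonneg hx (n + 1)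
  have h1 : x ^ n / (Nat.factorial n : ℝ) ≤ ∑ i ∈ Finset.range (n + 1), x ^ i / (Nat.factorial i : ℝ) := by
    refine Finset.single_le_sum (f := fun i => x ^ i / (Nat.factorial i : ℝ)) ?_ (Finset.self_mem_range_succ n)
    intro i _
    positivity
  have hn : (0 : ℝ) < (Nat.factorial n : ℝ) := by positivity
  rw [div_le_iff₀ hn] at h1
  calc x ^ n ≤ (∑ i ∈ Finset.range (n + 1), x ^ i / (Nat.factorial i : ℝ)) * (Nat.factorial n : ℝ) := h1
    _ ≤ Real.exp x * (Nat.factorial n : ℝ) := by nlinarith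
    _ = (Nat.factorial n : ℝ) * Real.exp x := by ring

lemma hardyAux_rpow_le_exp (k a : ℝ) (ha : 0 < a) :
    ∃ c : ℝ, 0 < c ∧ ∀ t, a ≤ t → t ^ k ≤ c * Real.exp (2 * t) := by
  rcases le_or_gt k 0 with hk | hk
  · refine ⟨a ^ k, Real.rpow_pos_of_pos ha k, fun t ht => ?_⟩
    have h1 : t ^ k ≤ a ^ k := Real.rpow_le_rpow_of_nonpos ha ht hk
    have h2 : (1 : ℝ) ≤ Real.exp (2 * t) := by
      rw [Real.one_le_exp_iff]
      nlinarith
    nlinarith [Real.rpow_pos_of_pos ha k]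
  · refine ⟨((Nat.factorial ⌈k⌉₊ : ℕ) : ℝ), by positivity, fun t ht => ?_⟩
    have ht0 : 0 < t := lt_of_lt_of_le ha ht
    have hfac : (1:ℝ) ≤ ((Nat.factorial ⌈k⌉₊ : ℕ) : ℝ) := by exact_mod_cast Nat.one_le_iff_ne_zero.mpr (Nat.factorial_ne_zero _)
    rcases le_or_gt 1 t with h1 | h1
    · have e1 : t ^ k ≤ t ^ ((⌈k⌉₊ : ℝ)) := Real.rpow_le_rpow_of_exponent_le h1 (Nat.le_ceil k)
      rw [Real.rpow_natCast] at e1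
      have e2 : t ^ (⌈k⌉₊) ≤ ((Nat.factorial ⌈k⌉₊ : ℕ) : ℝ) * Real.exp t := hardyAux_pow_factorial _ ht0.le
      have e3 : Real.exp t ≤ Real.exp (2 * t) := Real.exp_le_exp.mpr (by linarith)
      nlinarith
    · have e1 : t ^ k ≤ 1 := Real.rpow_le_one ht0.le h1.le hk.le
      have h2 : (1 : ℝ) ≤ Real.exp (2 * t) := by
        rw [Real.one_le_exp_iff]; nlinarith
      nlinarith

lemma hardyAux_hasDerivAt_G (m k : ℝ) {x : ℝ} (hx0 : 0 < x) (hx1 : x < 1) :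
    HasDerivAt (fun ρ => ρ ^ (-(2*m)) * (-Real.log ρ) ^ (-k))
      ((-(2*m)) * x ^ (-(2*m) - 1) * (-Real.log x) ^ (-k)
        + x ^ (-(2*m)) * ((-k) * (-Real.log x) ^ (-k - 1) * (-x⁻¹))) x := by
  have hlx : 0 < -Real.log x := by
    have := Real.log_neg hx0 hx1
    linarith
  have h1 : HasDerivAt (fun ρ : ℝ => ρ ^ (-(2*m))) ((-(2*m)) * x ^ (-(2*m) - 1)) x :=
    Real.hasDerivAt_rpow_const (Or.inl hx0.ne')
  have hinner : HasDerivAt (fun ρ : ℝ => -Real.log ρ) (-x⁻¹) x :=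
    (Real.hasDerivAt_log hx0.ne').neg
  have houter : HasDerivAt (fun y : ℝ => y ^ (-k)) ((-k) * (-Real.log x) ^ (-k - 1)) (-Real.log x) :=
    Real.hasDerivAt_rpow_const (Or.inl hlx.ne')
  have h2 : HasDerivAt (fun ρ : ℝ => (-Real.log ρ) ^ (-k))
      ((-k) * (-Real.log x) ^ (-k - 1) * (-x⁻¹)) x := by
    have h := houter.comp x hinner; exact h
  exact h1.mul h2

lemma hardyAux_pointwise (k A : ℝ) (hA0 : 0 < A) (hA1 : A < 1) (m : ℝ) (hm : 1 ≤ m)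
    {x : ℝ} (hx0 : 0 < x) (hxA : x ≤ A) :
    x ^ (-(2*m) - 1) * (-Real.log x) ^ (-k)
      ≤ -((-(2*m)) * x ^ (-(2*m) - 1) * (-Real.log x) ^ (-k)
          + x ^ (-(2*m)) * ((-k) * (-Real.log x) ^ (-k - 1) * (-x⁻¹)))
        + Real.exp (3 * |k|) * (-Real.log A) ^ (-k) * (1 + |k| / (-Real.log A)) := by
  set a := -Real.log A with ha_def
  have ha : 0 < a := by
    have := Real.log_neg hA0 hA1; simp only [ha_def]; linarith
  set t := -Real.log x with ht_def
  have hx1 : x < 1 := lt_of_le_of_lt hxA hA1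
  have ht0 : 0 < t := by
    have := Real.log_neg hx0 hx1; simp only [ht_def]; linarith
  have hta : a ≤ t := by
    have := Real.log_le_log hx0 hxA
    simp only [ht_def, ha_def]; linarith
  set P := x ^ (-(2*m) - 1) with hP_def
  have hP : 0 < P := Real.rpow_pos_of_pos hx0 _
  have hxx : x ^ (-(2*m)) * x⁻¹ = P := by
    rw [hP_def, show (-(2*m) - 1) = -(2*m) + (-1) by ring, Real.rpow_add hx0,
      Real.rpow_neg_one]
  have hsplit : x ^ (-(2*m)) * ((-k) * t ^ (-k - 1) * (-x⁻¹)) = k * (P * t ^ (-k - 1)) := by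
    calc x ^ (-(2*m)) * ((-k) * t ^ (-k - 1) * (-x⁻¹))
        = k * ((x ^ (-(2*m)) * x⁻¹) * t ^ (-k - 1)) := by ring
      _ = k * (P * t ^ (-k - 1)) := by rw [hxx]
  rw [hsplit]
  have htk : t ^ (-k - 1) * t = t ^ (-k) := by
    have h := Real.rpow_add ht0 (-k - 1) 1
    rw [Real.rpow_one] at h
    rw [← h]
    congr 1
    ring
  have htk1 : 0 < t ^ (-k - 1) := Real.rpow_pos_of_pos ht0 _
  have htkpos : 0 < t ^ (-k) := Real.rpow_pos_of_pos ht0 _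
  have hE : (0:ℝ) < Real.exp (3 * |k|) := Real.exp_pos _
  have hak : 0 < a ^ (-k) := Real.rpow_pos_of_pos ha _
  rcases le_or_gt k (m * t) with hc | hc
  · have key : k * (P * t ^ (-k - 1)) ≤ m * (P * t ^ (-k)) := by
      rw [← htk]
      nlinarith [mul_nonneg (sub_nonneg.mpr hc) (mul_pos hP htk1).le]
    have hD : 0 ≤ Real.exp (3 * |k|) * a ^ (-k) * (1 + |k| / a) := by positivity
    nlinarith [key, hD, mul_nonneg (by linarith : (0:ℝ) ≤ m - 1) (mul_pos hP htkpos).le]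
  · have hk0 : 0 < k := lt_trans (by positivity) hc
    have hkabs : |k| = k := abs_of_pos hk0
    rw [hkabs]
    have htlt : t < k := by nlinarith
    have hPle : P ≤ Real.exp (3 * k) := by
      rw [hP_def, Real.rpow_def_of_pos hx0]
      apply Real.exp_le_exp.mpr
      have hlx : Real.log x = -t := by simp [ht_def]
      rw [hlx]
      nlinarith
    have htka : t ^ (-k) ≤ a ^ (-k) :=
      Real.rpow_le_rpow_of_nonpos ha hta (by linarith)
    have htka1 : t ^ (-k - 1) ≤ a ^ (-k - 1) :=
      Real.rpow_le_rpow_of_nonpos ha hta (by linarith)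
    have haa : a ^ (-k - 1) = a ^ (-k) / a := by
      rw [show (-k - 1) = -k + (-1) by ring, Real.rpow_add ha, Real.rpow_neg_one]; ring
    have hEk : (0:ℝ) < Real.exp (3 * k) := Real.exp_pos _
    have hb1 : k * (P * t ^ (-k - 1)) ≤ Real.exp (3 * k) * a ^ (-k) * (k / a) := by
      have h1 : P * t ^ (-k - 1) ≤ Real.exp (3 * k) * (a ^ (-k) / a) := by
        have h2 := mul_le_mul hPle htka1 htk1.le hEk.le
        rw [haa] at h2
        exact h2
      calc k * (P * t ^ (-k - 1)) ≤ k * (Real.exp (3 * k) * (a ^ (-k) / a)) :=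
            mul_le_mul_of_nonneg_left h1 hk0.le
        _ = Real.exp (3 * k) * a ^ (-k) * (k / a) := by ring
    have hb2 : P * t ^ (-k) ≤ Real.exp (3 * k) * a ^ (-k) := mul_le_mul hPle htka htkpos.le hEk.le
    have hpos : 0 ≤ 2 * m * (P * t ^ (-k)) := by positivity
    nlinarith [hb1, hb2, hpos]

lemma hardyAux_inner (k A : ℝ) (hA0 : 0 < A) (hA1 : A < 1) :
    ∃ C₁ : ℝ, 0 < C₁ ∧ ∀ m : ℝ, 1 ≤ m → ∀ r : ℝ, r ∈ Set.Ioo (0:ℝ) A →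
      ∫⁻ ρ in Set.Ioo r A, ENNReal.ofReal (ρ ^ (-(2*m) - 1) * (-Real.log ρ) ^ (-k))
        ≤ ENNReal.ofReal (C₁ * (r ^ (-(2*m)) * (-Real.log r) ^ (-k))) := by
  have haA : 0 < -Real.log A := by have := Real.log_neg hA0 hA1; linarith
  obtain ⟨c, hc, hcle⟩ := hardyAux_rpow_le_exp k (-Real.log A) haA
  set a := -Real.log A with ha_def
  set D := Real.exp (3 * |k|) * a ^ (-k) * (1 + |k| / a) with hD_def
  have hD : 0 ≤ D := by
    have h3 : (0:ℝ) ≤ Real.exp (3 * |k|) * a ^ (-k) := by positivity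
    have h2 : (0:ℝ) ≤ |k| / a := by positivity
    exact mul_nonneg h3 (by linarith)
  refine ⟨1 + D * c, by positivity, ?_⟩
  intro m hm r hr
  obtain ⟨hr0, hrA⟩ := hr
  set G : ℝ → ℝ := fun ρ => ρ ^ (-(2*m)) * (-Real.log ρ) ^ (-k) with hG_def
  set gder : ℝ → ℝ := fun x => (-(2*m)) * x ^ (-(2*m) - 1) * (-Real.log x) ^ (-k)
      + x ^ (-(2*m)) * ((-k) * (-Real.log x) ^ (-k - 1) * (-x⁻¹)) with hgder_def
  have hmem : ∀ x ∈ Set.Icc r A, 0 < x ∧ x < 1 := fun x hx =>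
    ⟨lt_of_lt_of_le hr0 hx.1, lt_of_le_of_lt hx.2 hA1⟩
  have hderiv : ∀ x ∈ Set.uIcc r A, HasDerivAt G (gder x) x := by
    intro x hx
    rw [Set.uIcc_of_le hrA.le] at hx
    obtain ⟨hx0, hx1⟩ := hmem x hx
    exact hardyAux_hasDerivAt_G m k hx0 hx1
  have hcont : ContinuousOn gder (Set.uIcc r A) := by
    rw [Set.uIcc_of_le hrA.le]
    intro x hx
    obtain ⟨hx0, hx1⟩ := hmem x hx
    have hlx : -Real.log x ≠ 0 := by
      have := Real.log_neg hx0 hx1; intro h; rw [← h] at this; linarith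
    have c1 : ContinuousAt (fun ρ : ℝ => ρ ^ (-(2*m) - 1)) x :=
      Real.continuousAt_rpow_const x _ (Or.inl hx0.ne')
    have c2 : ContinuousAt (fun ρ : ℝ => (-Real.log ρ) ^ (-k)) x :=
      ((Real.continuousAt_log hx0.ne').neg).rpow_const (Or.inl hlx)
    have c3 : ContinuousAt (fun ρ : ℝ => ρ ^ (-(2*m))) x :=
      Real.continuousAt_rpow_const x _ (Or.inl hx0.ne')
    have c4 : ContinuousAt (fun ρ : ℝ => (-Real.log ρ) ^ (-k - 1)) x :=
      ((Real.continuousAt_log hx0.ne').neg).rpow_const (Or.inl hlx)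
    have c5 : ContinuousAt (fun ρ : ℝ => -ρ⁻¹) x := (continuousAt_inv₀ hx0.ne').neg
    exact (((continuousAt_const.mul c1).mul c2).add
      (c3.mul ((continuousAt_const.mul c4).mul c5))).continuousWithinAt
  have hint : IntervalIntegrable gder MeasureTheory.volume r A :=
    hcont.intervalIntegrable
  have hftc : ∫ y in r..A, gder y = G A - G r :=
    intervalIntegral.integral_eq_sub_of_hasDerivAt hderiv hint
  set φ : ℝ → ℝ := fun x => -gder x + D with hφ_def
  have hφbound : ∀ x ∈ Set.Icc r A, x ^ (-(2*m) - 1) * (-Real.log x) ^ (-k) ≤ φ x :=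
    fun x hx => hardyAux_pointwise k A hA0 hA1 m hm (hmem x hx).1 hx.2
  have hφnonneg : ∀ x ∈ Set.Icc r A, 0 ≤ φ x := by
    intro x hx
    refine le_trans ?_ (hφbound x hx)
    have hx0 := (hmem x hx).1
    have hlx : 0 < -Real.log x := by
      have := Real.log_neg hx0 (hmem x hx).2; linarith
    positivity
  have hφint : IntervalIntegrable φ MeasureTheory.volume r A :=
    hint.neg.add intervalIntegrable_const
  have hφIoo : MeasureTheory.IntegrableOn φ (Set.Ioo r A) := by
    have := (intervalIntegrable_iff_integrableOn_Ioc_of_le hrA.le).mp hφint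
    exact this.mono_set Set.Ioo_subset_Ioc_self
  have hval : ∫ y in r..A, φ y = (G r - G A) + D * (A - r) := by
    have hneg : IntervalIntegrable (fun x => -gder x) MeasureTheory.volume r A := hint.neg
    simp only [hφ_def]
    rw [intervalIntegral.integral_add hneg intervalIntegrable_const,
      intervalIntegral.integral_neg, hftc, intervalIntegral.integral_const]
    simp only [smul_eq_mul]
    ring
  -- lower bound for G r
  have hrt : 0 < -Real.log r := by
    have := Real.log_neg hr0 (lt_trans hrA hA1); linarith
  have hta : a ≤ -Real.log r := by
    have := Real.log_le_log hr0 hrA.le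
    simp only [ha_def]; linarith
  have hGr_pos : 0 < G r := by
    have h1 : 0 < r ^ (-(2*m)) := Real.rpow_pos_of_pos hr0 _
    have h2 : 0 < (-Real.log r) ^ (-k) := Real.rpow_pos_of_pos hrt _
    exact mul_pos h1 h2
  have hcGr : 1 ≤ c * G r := by
    set t := -Real.log r with ht_def
    have htk := hcle t hta
    have htkpos : 0 < t ^ k := Real.rpow_pos_of_pos hrt k
    have hexp : Real.exp (2 * t) ≤ r ^ (-(2*m)) := by
      rw [Real.rpow_def_of_pos hr0]
      apply Real.exp_le_exp.mpr
      have : Real.log r = -t := by simp [ht_def]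
      rw [this]
      nlinarith [hrt]
    have hinv : (c * Real.exp (2 * t))⁻¹ ≤ t ^ (-k) := by
      rw [Real.rpow_neg hrt.le]
      apply inv_anti₀ htkpos htk
    have hGr_ge : Real.exp (2 * t) * (c * Real.exp (2 * t))⁻¹ ≤ G r := by
      apply mul_le_mul hexp hinv (by positivity) (Real.rpow_pos_of_pos hr0 _).le
    have hsimp : Real.exp (2 * t) * (c * Real.exp (2 * t))⁻¹ = c⁻¹ := by
      field_simp
    rw [hsimp] at hGr_ge
    calc (1:ℝ) = c * c⁻¹ := (mul_inv_cancel₀ hc.ne').symm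
      _ ≤ c * G r := mul_le_mul_of_nonneg_left hGr_ge hc.le
  have hval_le : (G r - G A) + D * (A - r) ≤ (1 + D * c) * G r := by
    have hGA : 0 ≤ G A := by
      have h1 : 0 ≤ A ^ (-(2*m)) := (Real.rpow_pos_of_pos hA0 _).le
      have h2 : 0 ≤ (-Real.log A) ^ (-k) := (Real.rpow_pos_of_pos haA _).le
      exact mul_nonneg h1 h2
    have hAr : A - r ≤ 1 := by linarith
    nlinarith [hcGr, hD, hGr_pos]
  calc ∫⁻ ρ in Set.Ioo r A, ENNReal.ofReal (ρ ^ (-(2*m) - 1) * (-Real.log ρ) ^ (-k))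
      ≤ ∫⁻ ρ in Set.Ioo r A, ENNReal.ofReal (φ ρ) := by
        apply MeasureTheory.lintegral_mono_ae
        rw [MeasureTheory.ae_restrict_iff' measurableSet_Ioo]
        filter_upwards with x hx
        exact ENNReal.ofReal_le_ofReal
          (hφbound x ⟨hx.1.le, hx.2.le⟩)
    _ = ENNReal.ofReal (∫ ρ in Set.Ioo r A, φ ρ) := by
        rw [MeasureTheory.ofReal_integral_eq_lintegral_ofReal hφIoo]
        filter_upwards [MeasureTheory.ae_restrict_mem measurableSet_Ioo] with x hx
        simpa using hφnonneg x ⟨hx.1.le, hx.2.le⟩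
    _ ≤ ENNReal.ofReal ((1 + D * c) * (r ^ (-(2*m)) * (-Real.log r) ^ (-k))) := by
        apply ENNReal.ofReal_le_ofReal
        have : ∫ ρ in Set.Ioo r A, φ ρ = ∫ y in r..A, φ y := by
          rw [intervalIntegral.integral_of_le hrA.le,
            MeasureTheory.integral_Ioc_eq_integral_Ioo]
        rw [this, hval]
        exact hval_le

lemma hardyAux_piece (A : ℝ) (hA0 : 0 < A) (hA1 : A < 1) {ε : ℝ} (hε0 : 0 < ε) (hεA : ε < A) :
    ∫⁻ r in Set.Ioo ε A, ENNReal.ofReal (r ^ (-1:ℝ) * (-Real.log r) ^ (-2:ℝ))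
      ≤ ENNReal.ofReal (-Real.log A)⁻¹ := by
  set ψ : ℝ → ℝ := fun r => r ^ (-1:ℝ) * (-Real.log r) ^ (-2:ℝ) with hψ_def
  set Φ : ℝ → ℝ := fun r => (-Real.log r) ^ (-1:ℝ) with hΦ_def
  have hmem : ∀ x ∈ Set.Icc ε A, 0 < x ∧ x < 1 := fun x hx =>
    ⟨lt_of_lt_of_le hε0 hx.1, lt_of_le_of_lt hx.2 hA1⟩
  have hderiv : ∀ x ∈ Set.uIcc ε A, HasDerivAt Φ (ψ x) x := by
    intro x hx
    rw [Set.uIcc_of_le hεA.le] at hx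
    obtain ⟨hx0, hx1⟩ := hmem x hx
    have hlx : 0 < -Real.log x := by have := Real.log_neg hx0 hx1; linarith
    have hinner : HasDerivAt (fun ρ : ℝ => -Real.log ρ) (-x⁻¹) x :=
      (Real.hasDerivAt_log hx0.ne').neg
    have houter : HasDerivAt (fun y : ℝ => y ^ (-1:ℝ))
        ((-1:ℝ) * (-Real.log x) ^ (-1-1:ℝ)) (-Real.log x) :=
      Real.hasDerivAt_rpow_const (Or.inl hlx.ne')
    have h := houter.comp x hinner
    refine h.congr_deriv ?_
    symm
    rw [hψ_def]
    have h1 : ((-1:ℝ) - 1) = (-2:ℝ) := by norm_num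
    simp only [h1]
    rw [Real.rpow_neg_one]
    ring
  have hcont : ContinuousOn ψ (Set.uIcc ε A) := by
    rw [Set.uIcc_of_le hεA.le]
    intro x hx
    obtain ⟨hx0, hx1⟩ := hmem x hx
    have hlx : -Real.log x ≠ 0 := by
      have := Real.log_neg hx0 hx1; intro h; rw [← h] at this; linarith
    have c1 : ContinuousAt (fun ρ : ℝ => ρ ^ (-1:ℝ)) x :=
      Real.continuousAt_rpow_const x _ (Or.inl hx0.ne')
    have c2 : ContinuousAt (fun ρ : ℝ => (-Real.log ρ) ^ (-2:ℝ)) x :=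
      ((Real.continuousAt_log hx0.ne').neg).rpow_const (Or.inl hlx)
    exact (c1.mul c2).continuousWithinAt
  have hint : IntervalIntegrable ψ MeasureTheory.volume ε A := hcont.intervalIntegrable
  have hftc : ∫ y in ε..A, ψ y = Φ A - Φ ε :=
    intervalIntegral.integral_eq_sub_of_hasDerivAt hderiv hint
  have hIoo : MeasureTheory.IntegrableOn ψ (Set.Ioo ε A) := by
    have := (intervalIntegrable_iff_integrableOn_Ioc_of_le hεA.le).mp hint
    exact this.mono_set Set.Ioo_subset_Ioc_self
  have haA : 0 < -Real.log A := by have := Real.log_neg hA0 hA1; linarith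
  calc ∫⁻ r in Set.Ioo ε A, ENNReal.ofReal (ψ r)
      = ENNReal.ofReal (∫ r in Set.Ioo ε A, ψ r) := by
        rw [MeasureTheory.ofReal_integral_eq_lintegral_ofReal hIoo]
        filter_upwards [MeasureTheory.ae_restrict_mem measurableSet_Ioo] with x hx
        obtain ⟨hx0, hx1⟩ := hmem x ⟨hx.1.le, hx.2.le⟩
        have hlx : 0 < -Real.log x := by have := Real.log_neg hx0 hx1; linarith
        simp only [hψ_def]
        positivity
    _ ≤ ENNReal.ofReal (-Real.log A)⁻¹ := by
        apply ENNReal.ofReal_le_ofReal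
        have heq : ∫ r in Set.Ioo ε A, ψ r = ∫ y in ε..A, ψ y := by
          rw [intervalIntegral.integral_of_le hεA.le,
            MeasureTheory.integral_Ioc_eq_integral_Ioo]
        rw [heq, hftc]
        have hεlog : 0 < -Real.log ε := by
          have := Real.log_neg hε0 (lt_trans hεA hA1); linarith
        have hΦε : 0 ≤ Φ ε := (Real.rpow_pos_of_pos hεlog _).le
        have hΦA : Φ A = (-Real.log A)⁻¹ := by
          simp only [hΦ_def]; rw [Real.rpow_neg_one]
        linarith [hΦA.le, hΦA.ge]

lemma hardyAux_outer (A : ℝ) (hA0 : 0 < A) (hA1 : A < 1) :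
    ∫⁻ r in Set.Ioo (0:ℝ) A, ENNReal.ofReal (r ^ (-1:ℝ) * (-Real.log r) ^ (-2:ℝ))
      ≤ ENNReal.ofReal (-Real.log A)⁻¹ := by
  set ψe : ℝ → ℝ≥0∞ := fun r => ENNReal.ofReal (r ^ (-1:ℝ) * (-Real.log r) ^ (-2:ℝ)) with hψe
  set s : ℕ → Set ℝ := fun n => Set.Ioo (A / (n + 2)) A with hs_def
  have hsmono : Monotone s := by
    apply monotone_nat_of_le_succ
    intro n
    apply Set.Ioo_subset_Ioo_left
    apply div_le_div_of_nonneg_left hA0.le (by positivity)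
    push_cast; linarith
  have hsunion : Set.Ioo (0:ℝ) A = ⋃ n, s n := by
    ext x
    simp only [hs_def, Set.mem_iUnion, Set.mem_Ioo]
    constructor
    · rintro ⟨hx0, hxA⟩
      obtain ⟨n, hn⟩ := exists_nat_gt (A / x)
      refine ⟨n, ?_, hxA⟩
      rw [div_lt_iff₀ (by positivity)]
      rw [div_lt_iff₀ hx0] at hn
      nlinarith
    · rintro ⟨n, h1, h2⟩
      exact ⟨lt_trans (by positivity) h1, h2⟩
  have hwd : ∀ t : Set ℝ, MeasurableSet t →
      (MeasureTheory.volume.withDensity ψe) t = ∫⁻ r in t, ψe r :=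
    fun t ht => MeasureTheory.withDensity_apply ψe ht
  rw [← hwd _ measurableSet_Ioo, hsunion,
    Directed.measure_iUnion (hsmono.directed_le)]
  apply iSup_le
  intro n
  rw [hwd _ measurableSet_Ioo]
  apply hardyAux_piece A hA0 hA1 (by positivity)
  calc A / ((n:ℝ) + 2) < A / 1 := by
        apply div_lt_div_of_pos_left hA0 one_pos
        push_cast; linarith
    _ = A := div_one A

lemma hardyAux_split (k m : ℝ) {ρ : ℝ} (h0 : 0 < ρ) (h1 : ρ < 1) (c : ℝ) :
    ρ ^ (-m) * c
      = (c * (ρ ^ ((1:ℝ)/2) * (-Real.log ρ) ^ (k/2)))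
        * (ρ ^ (-m - 1/2) * (-Real.log ρ) ^ (-(k/2))) := by
  have ht : 0 < -Real.log ρ := by have := Real.log_neg h0 h1; linarith
  have e1 : ρ ^ ((1:ℝ)/2) * ρ ^ (-m - 1/2) = ρ ^ (-m) := by
    rw [← Real.rpow_add h0]; congr 1; ring
  have e2 : (-Real.log ρ) ^ (k/2) * (-Real.log ρ) ^ (-(k/2)) = 1 := by
    rw [← Real.rpow_add ht]; norm_num
  calc ρ ^ (-m) * c
      = c * ((ρ ^ ((1:ℝ)/2) * ρ ^ (-m - 1/2)) * ((-Real.log ρ) ^ (k/2) * (-Real.log ρ) ^ (-(k/2)))) := by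
        rw [e1, e2]; ring
    _ = (c * (ρ ^ ((1:ℝ)/2) * (-Real.log ρ) ^ (k/2)))
        * (ρ ^ (-m - 1/2) * (-Real.log ρ) ^ (-(k/2))) := by ring

lemma hardyAux_gsq (k : ℝ) {ρ : ℝ} (h0 : 0 < ρ) (h1 : ρ < 1) (c : ℝ) :
    (c * (ρ ^ ((1:ℝ)/2) * (-Real.log ρ) ^ (k/2))) ^ 2 = c ^ 2 * ρ * (-Real.log ρ) ^ k := by
  have ht : 0 < -Real.log ρ := by have := Real.log_neg h0 h1; linarith
  have e1 : ρ ^ ((1:ℝ)/2) * ρ ^ ((1:ℝ)/2) = ρ := by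
    rw [← Real.rpow_add h0]; norm_num
  have e2 : (-Real.log ρ) ^ (k/2) * (-Real.log ρ) ^ (k/2) = (-Real.log ρ) ^ k := by
    rw [← Real.rpow_add ht]; congr 1; ring
  calc (c * (ρ ^ ((1:ℝ)/2) * (-Real.log ρ) ^ (k/2))) ^ 2
      = c ^ 2 * ((ρ ^ ((1:ℝ)/2) * ρ ^ ((1:ℝ)/2))
          * ((-Real.log ρ) ^ (k/2) * (-Real.log ρ) ^ (k/2))) := by ring
    _ = c ^ 2 * ρ * (-Real.log ρ) ^ k := by rw [e1, e2]; ring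

lemma hardyAux_hsq (k m : ℝ) {ρ : ℝ} (h0 : 0 < ρ) (h1 : ρ < 1) :
    (ρ ^ (-m - 1/2) * (-Real.log ρ) ^ (-(k/2))) ^ 2
      = ρ ^ (-(2*m) - 1) * (-Real.log ρ) ^ (-k) := by
  have ht : 0 < -Real.log ρ := by have := Real.log_neg h0 h1; linarith
  have e1 : ρ ^ (-m - 1/2) * ρ ^ (-m - 1/2) = ρ ^ (-(2*m) - 1) := by
    rw [← Real.rpow_add h0]; congr 1; ring
  have e2 : (-Real.log ρ) ^ (-(k/2)) * (-Real.log ρ) ^ (-(k/2)) = (-Real.log ρ) ^ (-k) := by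
    rw [← Real.rpow_add ht]; congr 1; ring
  calc (ρ ^ (-m - 1/2) * (-Real.log ρ) ^ (-(k/2))) ^ 2
      = (ρ ^ (-m - 1/2) * ρ ^ (-m - 1/2))
          * ((-Real.log ρ) ^ (-(k/2)) * (-Real.log ρ) ^ (-(k/2))) := by ring
    _ = ρ ^ (-(2*m) - 1) * (-Real.log ρ) ^ (-k) := by rw [e1, e2]

lemma hardyAux_weight (k m C₁ : ℝ) {r : ℝ} (h0 : 0 < r) (h1 : r < 1) :
    (r ^ (2*m - 1) * (-Real.log r) ^ (k - 2)) * (C₁ * (r ^ (-(2*m)) * (-Real.log r) ^ (-k)))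
      = C₁ * (r ^ (-1:ℝ) * (-Real.log r) ^ (-2:ℝ)) := by
  have ht : 0 < -Real.log r := by have := Real.log_neg h0 h1; linarith
  have e1 : r ^ (2*m - 1) * r ^ (-(2*m)) = r ^ (-1:ℝ) := by
    rw [← Real.rpow_add h0]; congr 1; ring
  have e2 : (-Real.log r) ^ (k - 2) * (-Real.log r) ^ (-k) = (-Real.log r) ^ (-2:ℝ) := by
    rw [← Real.rpow_add ht]; congr 1; ring
  calc (r ^ (2*m - 1) * (-Real.log r) ^ (k - 2)) * (C₁ * (r ^ (-(2*m)) * (-Real.log r) ^ (-k)))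
      = C₁ * ((r ^ (2*m - 1) * r ^ (-(2*m))) * ((-Real.log r) ^ (k - 2) * (-Real.log r) ^ (-k))) := by
        ring
    _ = C₁ * (r ^ (-1:ℝ) * (-Real.log r) ^ (-2:ℝ)) := by rw [e1, e2]

lemma hardyAux_ennreal_sq (x : ℝ≥0∞) : (x ^ ((1:ℝ)/2)) ^ (2:ℕ) = x := by
  rw [← ENNReal.rpow_natCast (x ^ ((1:ℝ)/2)) 2, ← ENNReal.rpow_mul]
  norm_num

/-- Weighted Hardy-type inequality (inner integral up to `A`): for every real `k` and
`A ∈ (0,1)` there is `C > 0` such that for every real `m ≥ 1` and measurable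
`f : (0,A) → ℂ`,
`∫₀^A r^(2m-1) (-log r)^(k-2) (∫_r^A ρ^(-m) |f ρ| dρ)² dr
  ≤ C ∫₀^A |f r|² r (-log r)^k dr` in `[0,∞]`. -/
theorem hardy_weighted_inner_to_A (k : ℝ) (A : ℝ) (hA0 : 0 < A) (hA1 : A < 1) :
    ∃ C : ℝ, 0 < C ∧ ∀ m : ℝ, 1 ≤ m → ∀ f : ℝ → ℂ, Measurable f →
      ∫⁻ r in Set.Ioo (0 : ℝ) A,
          ENNReal.ofReal (r ^ (2 * m - 1) * (-Real.log r) ^ (k - 2)) *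
            (∫⁻ ρ in Set.Ioo r A,
              ENNReal.ofReal (ρ ^ (-m) * ‖f ρ‖)) ^ 2
        ≤ ENNReal.ofReal C *
          ∫⁻ r in Set.Ioo (0 : ℝ) A,
            ENNReal.ofReal (‖f r‖ ^ 2 * r * (-Real.log r) ^ k) := by
  have haA : 0 < -Real.log A := by have := Real.log_neg hA0 hA1; linarith
  obtain ⟨C₁, hC₁, hinner⟩ := hardyAux_inner k A hA0 hA1
  refine ⟨C₁ * (-Real.log A)⁻¹, by positivity, ?_⟩
  intro m hm f hf
  set T := ∫⁻ r in Set.Ioo (0:ℝ) A,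
      ENNReal.ofReal (‖f r‖ ^ 2 * r * (-Real.log r) ^ k) with hT_def
  by_cases hTtop : T = ⊤
  · rw [hTtop, ENNReal.mul_top (by
      simp only [ne_eq, ENNReal.ofReal_eq_zero, not_le]
      positivity)]
    exact le_top
  have hmem : ∀ x ∈ Set.Ioo (0:ℝ) A, 0 < x ∧ x < 1 := fun x hx =>
    ⟨hx.1, lt_trans hx.2 hA1⟩
  -- key pointwise bound
  have key : ∀ r ∈ Set.Ioo (0:ℝ) A,
      (∫⁻ ρ in Set.Ioo r A, ENNReal.ofReal (ρ ^ (-m) * ‖f ρ‖)) ^ 2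
        ≤ T * ENNReal.ofReal (C₁ * (r ^ (-(2*m)) * (-Real.log r) ^ (-k))) := by
    intro r hr
    obtain ⟨hr0, hrA⟩ := hr
    have hsub : Set.Ioo r A ⊆ Set.Ioo (0:ℝ) A := Set.Ioo_subset_Ioo_left hr0.le
    set g : ℝ → ℝ≥0∞ := fun ρ =>
      ENNReal.ofReal (‖f ρ‖ * (ρ ^ ((1:ℝ)/2) * (-Real.log ρ) ^ (k/2))) with hg_def
    set h : ℝ → ℝ≥0∞ := fun ρ =>
      ENNReal.ofReal (ρ ^ (-m - 1/2) * (-Real.log ρ) ^ (-(k/2))) with hh_def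
    have hcongr : ∫⁻ ρ in Set.Ioo r A, ENNReal.ofReal (ρ ^ (-m) * ‖f ρ‖)
        = ∫⁻ ρ in Set.Ioo r A, (g * h) ρ := by
      apply MeasureTheory.setLIntegral_congr_fun measurableSet_Ioo
      intro ρ hρ
      obtain ⟨hρ0, hρ1⟩ := hmem ρ (hsub hρ)
      have hlρ : (0:ℝ) ≤ -Real.log ρ := by have := Real.log_neg hρ0 hρ1; linarith
      simp only [hg_def, hh_def, Pi.mul_apply]
      rw [← ENNReal.ofReal_mul (mul_nonneg (norm_nonneg _)
        (mul_nonneg (Real.rpow_nonneg hρ0.le _) (Real.rpow_nonneg hlρ _)))]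
      congr 1
      exact hardyAux_split k m hρ0 hρ1 _
    have hgmeas : AEMeasurable g (MeasureTheory.volume.restrict (Set.Ioo r A)) := by
      apply Measurable.aemeasurable
      apply ENNReal.measurable_ofReal.comp
      exact (continuous_norm.measurable.comp hf).mul
        ((measurable_id.pow measurable_const).mul
          ((Real.measurable_log.neg).pow measurable_const))
    have hhmeas : AEMeasurable h (MeasureTheory.volume.restrict (Set.Ioo r A)) := by
      apply Measurable.aemeasurable
      apply ENNReal.measurable_ofReal.comp
      exact (measurable_id.pow measurable_const).mul
        ((Real.measurable_log.neg).pow measurable_const)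
    have hconj : Real.HolderConjugate 2 2 := Real.HolderConjugate.two_two
    have hold := ENNReal.lintegral_mul_le_Lp_mul_Lq
      (MeasureTheory.volume.restrict (Set.Ioo r A)) hconj hgmeas hhmeas
    have hg2 : ∫⁻ ρ in Set.Ioo r A, g ρ ^ (2:ℝ) ≤ T := by
      have hpt : ∀ ρ ∈ Set.Ioo r A, g ρ ^ (2:ℝ)
          = ENNReal.ofReal (‖f ρ‖ ^ 2 * ρ * (-Real.log ρ) ^ k) := by
        intro ρ hρ
        obtain ⟨hρ0, hρ1⟩ := hmem ρ (hsub hρ)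
        have hlρ : (0:ℝ) ≤ -Real.log ρ := by have := Real.log_neg hρ0 hρ1; linarith
        simp only [hg_def]
        rw [ENNReal.ofReal_rpow_of_nonneg
          (mul_nonneg (norm_nonneg _)
            (mul_nonneg (Real.rpow_nonneg hρ0.le _) (Real.rpow_nonneg hlρ _)))
          (by norm_num : (0:ℝ) ≤ 2)]
        congr 1
        rw [show (2:ℝ) = ((2:ℕ):ℝ) by norm_num, Real.rpow_natCast]
        exact hardyAux_gsq k hρ0 hρ1 _
      rw [MeasureTheory.setLIntegral_congr_fun measurableSet_Ioo
        hpt]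
      exact MeasureTheory.lintegral_mono_set hsub
    have hh2 : ∫⁻ ρ in Set.Ioo r A, h ρ ^ (2:ℝ)
        ≤ ENNReal.ofReal (C₁ * (r ^ (-(2*m)) * (-Real.log r) ^ (-k))) := by
      have hpt : ∀ ρ ∈ Set.Ioo r A, h ρ ^ (2:ℝ)
          = ENNReal.ofReal (ρ ^ (-(2*m) - 1) * (-Real.log ρ) ^ (-k)) := by
        intro ρ hρ
        obtain ⟨hρ0, hρ1⟩ := hmem ρ (hsub hρ)
        have hlρ : (0:ℝ) ≤ -Real.log ρ := by have := Real.log_neg hρ0 hρ1; linarith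
        simp only [hh_def]
        rw [ENNReal.ofReal_rpow_of_nonneg
          (mul_nonneg (Real.rpow_nonneg hρ0.le _) (Real.rpow_nonneg hlρ _))
          (by norm_num : (0:ℝ) ≤ 2)]
        congr 1
        rw [show (2:ℝ) = ((2:ℕ):ℝ) by norm_num, Real.rpow_natCast]
        exact hardyAux_hsq k m hρ0 hρ1
      rw [MeasureTheory.setLIntegral_congr_fun measurableSet_Ioo
        hpt]
      exact hinner m hm r ⟨hr0, hrA⟩
    calc (∫⁻ ρ in Set.Ioo r A, ENNReal.ofReal (ρ ^ (-m) * ‖f ρ‖)) ^ 2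
        = (∫⁻ ρ in Set.Ioo r A, (g * h) ρ) ^ 2 := by rw [hcongr]
      _ ≤ ((∫⁻ ρ in Set.Ioo r A, g ρ ^ (2:ℝ)) ^ ((1:ℝ)/2)
            * (∫⁻ ρ in Set.Ioo r A, h ρ ^ (2:ℝ)) ^ ((1:ℝ)/2)) ^ 2 :=
          pow_le_pow_left' hold 2
      _ = (∫⁻ ρ in Set.Ioo r A, g ρ ^ (2:ℝ)) * (∫⁻ ρ in Set.Ioo r A, h ρ ^ (2:ℝ)) := by
          rw [mul_pow, hardyAux_ennreal_sq, hardyAux_ennreal_sq]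
      _ ≤ T * ENNReal.ofReal (C₁ * (r ^ (-(2*m)) * (-Real.log r) ^ (-k))) :=
          mul_le_mul' hg2 hh2
  -- assemble
  calc ∫⁻ r in Set.Ioo (0:ℝ) A,
        ENNReal.ofReal (r ^ (2 * m - 1) * (-Real.log r) ^ (k - 2)) *
          (∫⁻ ρ in Set.Ioo r A, ENNReal.ofReal (ρ ^ (-m) * ‖f ρ‖)) ^ 2
      ≤ ∫⁻ r in Set.Ioo (0:ℝ) A,
          ENNReal.ofReal (C₁ * (r ^ (-1:ℝ) * (-Real.log r) ^ (-2:ℝ))) * T := by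
        apply MeasureTheory.lintegral_mono_ae
        rw [MeasureTheory.ae_restrict_iff' measurableSet_Ioo]
        apply MeasureTheory.ae_of_all
        intro r hr
        obtain ⟨hr0, hr1⟩ := hmem r hr
        calc ENNReal.ofReal (r ^ (2 * m - 1) * (-Real.log r) ^ (k - 2)) *
              (∫⁻ ρ in Set.Ioo r A, ENNReal.ofReal (ρ ^ (-m) * ‖f ρ‖)) ^ 2
            ≤ ENNReal.ofReal (r ^ (2 * m - 1) * (-Real.log r) ^ (k - 2)) *
              (T * ENNReal.ofReal (C₁ * (r ^ (-(2*m)) * (-Real.log r) ^ (-k)))) :=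
              mul_le_mul_right (key r hr) _
          _ = (ENNReal.ofReal (r ^ (2 * m - 1) * (-Real.log r) ^ (k - 2)) *
                ENNReal.ofReal (C₁ * (r ^ (-(2*m)) * (-Real.log r) ^ (-k)))) * T := by ring
          _ = ENNReal.ofReal (C₁ * (r ^ (-1:ℝ) * (-Real.log r) ^ (-2:ℝ))) * T := by
              have hlr : (0:ℝ) ≤ -Real.log r := by have := Real.log_neg hr0 hr1; linarith
              rw [← ENNReal.ofReal_mul
                (mul_nonneg (Real.rpow_nonneg hr0.le _) (Real.rpow_nonneg hlr _))]
              exact congrArg (· * T) (congrArg ENNReal.ofReal (hardyAux_weight k m C₁ hr0 hr1))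
    _ = (∫⁻ r in Set.Ioo (0:ℝ) A,
          ENNReal.ofReal (C₁ * (r ^ (-1:ℝ) * (-Real.log r) ^ (-2:ℝ)))) * T :=
        MeasureTheory.lintegral_mul_const' T _ hTtop
    _ = ENNReal.ofReal C₁ * (∫⁻ r in Set.Ioo (0:ℝ) A,
          ENNReal.ofReal (r ^ (-1:ℝ) * (-Real.log r) ^ (-2:ℝ))) * T := by
        congr 1
        simp_rw [ENNReal.ofReal_mul hC₁.le]
        rw [MeasureTheory.lintegral_const_mul' _ _ ENNReal.ofReal_ne_top]
    _ ≤ ENNReal.ofReal C₁ * ENNReal.ofReal (-Real.log A)⁻¹ * T := by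
        apply mul_le_mul_left
        exact mul_le_mul_right (hardyAux_outer A hA0 hA1) _
    _ = ENNReal.ofReal (C₁ * (-Real.log A)⁻¹) * T := by
        rw [← ENNReal.ofReal_mul hC₁.le]
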